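/- With the β-divided difference operators φ_i(f) := ((1 + βx_{i+1})f - (1 + βx_i)sᵢf)/(x_i - x_{i+1}) on ℤ[β][x₁,…,xₙ], the braid relation φ_i ∘ φ_{i+1} ∘ φ_i = φ_{i+1} ∘ φ_i ∘ φ_{i+1} holds for all 1 ≤ i ≤ n-2. -/

import Mathlib

open MvPolynomial

/-- The formal variable β in `ℤ[β]`. -/
noncomputable def Bv (n : ℕ) : MvPolynomial (Fin n) (Polynomial ℤ) :=
  MvPolynomial.C Polynomial.X

/-- Exchange of the variables `x_i` and `x_j`. -/
noncomputable def swp {n : ℕ} (i j : Fin n) (f : MvPolynomial (Fin n) (Polynomial ℤ)) :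
    MvPolynomial (Fin n) (Polynomial ℤ) :=
  MvPolynomial.rename (Equiv.swap i j) f

/-- The numerator `(1 + β x_{i+1}) f - (1 + β x_i) sᵢ f` of the β-divided difference. -/
noncomputable def numer {n : ℕ} (i i' : Fin n) (f : MvPolynomial (Fin n) (Polynomial ℤ)) :
    MvPolynomial (Fin n) (Polynomial ℤ) :=
  (1 + Bv n * X i') * f - (1 + Bv n * X i) * swp i i' f

theorem stmt_17 (n : ℕ) (i i' i'' : Fin n)
    (hi : (i : ℕ) + 1 = (i' : ℕ)) (hi' : (i' : ℕ) + 1 = (i'' : ℕ))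
    (φ₁ φ₂ : MvPolynomial (Fin n) (Polynomial ℤ) → MvPolynomial (Fin n) (Polynomial ℤ))
    (hφ₁ : ∀ f, (X i - X i') * φ₁ f = numer i i' f)
    (hφ₂ : ∀ f, (X i' - X i'') * φ₂ f = numer i' i'' f) :
    ∀ f, φ₁ (φ₂ (φ₁ f)) = φ₂ (φ₁ (φ₂ f)) := by
  intro f
  have h12 : i ≠ i' := by intro h; subst h; omega
  have h23 : i' ≠ i'' := by intro h; subst h; omega
  have h13 : i ≠ i'' := by intro h; subst h; omega
  set β : MvPolynomial (Fin n) (Polynomial ℤ) := Bv n with hβ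
  have hC : (MvPolynomial.C Polynomial.X : MvPolynomial (Fin n) (Polynomial ℤ)) = β := rfl
  have rb1 : rename (⇑(Equiv.swap i i')) β = β := rename_C _ _
  have rb2 : rename (⇑(Equiv.swap i' i'')) β = β := rename_C _ _
  -- values of the swap permutations on the fixed point
  have s2i : Equiv.swap i' i'' i = i := Equiv.swap_apply_of_ne_of_ne h12 h13
  have s1i'' : Equiv.swap i i' i'' = i'' :=
    Equiv.swap_apply_of_ne_of_ne h13.symm h23.symm
  -- involution of swaps
  have inv1 : ∀ g : MvPolynomial (Fin n) (Polynomial ℤ),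
      rename (Equiv.swap i i') (rename (Equiv.swap i i') g) = g := by
    intro g
    rw [rename_rename]
    have : (⇑(Equiv.swap i i')) ∘ (⇑(Equiv.swap i i')) = id := by
      funext x; simp [Equiv.swap_apply_self]
    rw [this, rename_id, AlgHom.id_apply]
  have inv2 : ∀ g : MvPolynomial (Fin n) (Polynomial ℤ),
      rename (Equiv.swap i' i'') (rename (Equiv.swap i' i'') g) = g := by
    intro g
    rw [rename_rename]
    have : (⇑(Equiv.swap i' i'')) ∘ (⇑(Equiv.swap i' i'')) = id := by
      funext x; simp [Equiv.swap_apply_self]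
    rw [this, rename_id, AlgHom.id_apply]
  -- braid relation for the swaps
  have hbraid : rename (Equiv.swap i' i'') (rename (Equiv.swap i i')
        (rename (Equiv.swap i' i'') f))
      = rename (Equiv.swap i i') (rename (Equiv.swap i' i'')
        (rename (Equiv.swap i i') f)) := by
    rw [rename_rename, rename_rename, rename_rename, rename_rename]
    have hfun : ((⇑(Equiv.swap i' i'') ∘ ⇑(Equiv.swap i i')) ∘ ⇑(Equiv.swap i' i''))
        = ((⇑(Equiv.swap i i') ∘ ⇑(Equiv.swap i' i'')) ∘ ⇑(Equiv.swap i i')) := by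
      funext x
      simp only [Function.comp_apply]
      by_cases hx1 : x = i
      · subst hx1
        simp [Equiv.swap_apply_left, Equiv.swap_apply_right, s2i, s1i'']
      · by_cases hx2 : x = i'
        · subst hx2
          simp [Equiv.swap_apply_left, Equiv.swap_apply_right, s2i, s1i'']
        · by_cases hx3 : x = i''
          · subst hx3
            simp [Equiv.swap_apply_left, Equiv.swap_apply_right, s2i, s1i'']
          · simp [Equiv.swap_apply_of_ne_of_ne hx1 hx2,
              Equiv.swap_apply_of_ne_of_ne hx2 hx3,
              Equiv.swap_apply_of_ne_of_ne hx1 hx3]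
    rw [hfun]
  -- base equations in rename form
  have h1 : ∀ g, (X i - X i') * φ₁ g
      = (1 + β * X i') * g - (1 + β * X i) * rename (Equiv.swap i i') g := by
    intro g; simpa [numer, swp, hβ] using hφ₁ g
  have h2 : ∀ g, (X i' - X i'') * φ₂ g
      = (1 + β * X i'') * g - (1 + β * X i') * rename (Equiv.swap i' i'') g := by
    intro g; simpa [numer, swp, hβ] using hφ₂ g
  -- s₂ applied to h1
  have h1s2 : ∀ g, (X i - X i'') * rename (Equiv.swap i' i'') (φ₁ g)
      = (1 + β * X i'') * rename (Equiv.swap i' i'') g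
        - (1 + β * X i) * rename (Equiv.swap i' i'') (rename (Equiv.swap i i') g) := by
    intro g
    have h := congrArg (fun q => rename (Equiv.swap i' i'') q) (h1 g)
    simpa [map_sub, map_mul, map_add, rename_X, hβ, Bv, rename_C, s2i] using h
  -- s₁ applied to h2
  have h2s1 : ∀ g, (X i - X i'') * rename (Equiv.swap i i') (φ₂ g)
      = (1 + β * X i'') * rename (Equiv.swap i i') g
        - (1 + β * X i) * rename (Equiv.swap i i') (rename (Equiv.swap i' i'') g) := by
    intro g
    have h := congrArg (fun q => rename (Equiv.swap i i') q) (h2 g)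
    simpa [map_sub, map_mul, map_add, rename_X, hβ, Bv, rename_C, s1i''] using h
  -- s₁ applied to h1
  have h1s1 : ∀ g, (X i - X i') * rename (Equiv.swap i i') (φ₁ g)
      = (1 + β * X i') * g - (1 + β * X i) * rename (Equiv.swap i i') g := by
    intro g
    have h := congrArg (fun q => rename (Equiv.swap i i') q) (h1 g)
    simp only [map_sub, map_mul, map_add, map_one, rename_X, rename_C, hC, rb1,
      Equiv.swap_apply_left, Equiv.swap_apply_right, inv1 g] at h
    linear_combination -h
  -- s₂ applied to h2
  have h2s2 : ∀ g, (X i' - X i'') * rename (Equiv.swap i' i'') (φ₂ g)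
      = (1 + β * X i'') * g - (1 + β * X i') * rename (Equiv.swap i' i'') g := by
    intro g
    have h := congrArg (fun q => rename (Equiv.swap i' i'') q) (h2 g)
    simp only [map_sub, map_mul, map_add, map_one, rename_X, rename_C, hC, rb2,
      Equiv.swap_apply_left, Equiv.swap_apply_right, inv2 g] at h
    linear_combination -h
  -- s₁s₂ applied to h1, at f
  have E7 : (X i' - X i'') * rename (Equiv.swap i i') (rename (Equiv.swap i' i'') (φ₁ f))
      = (1 + β * X i'') * rename (Equiv.swap i i') (rename (Equiv.swap i' i'') f)
        - (1 + β * X i') * rename (Equiv.swap i i') (rename (Equiv.swap i' i'')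
            (rename (Equiv.swap i i') f)) := by
    have h := congrArg (fun q => rename (Equiv.swap i i') q) (h1s2 f)
    simpa [map_sub, map_mul, map_add, rename_X, hβ, Bv, rename_C, s1i'',
      Equiv.swap_apply_left, Equiv.swap_apply_right] using h
  -- s₂s₁ applied to h2, at f (uses braid relation on swaps)
  have E8 : (X i - X i') * rename (Equiv.swap i' i'') (rename (Equiv.swap i i') (φ₂ f))
      = (1 + β * X i') * rename (Equiv.swap i' i'') (rename (Equiv.swap i i') f)
        - (1 + β * X i) * rename (Equiv.swap i i') (rename (Equiv.swap i' i'')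
            (rename (Equiv.swap i i') f)) := by
    have h := congrArg (fun q => rename (Equiv.swap i' i'') q) (h2s1 f)
    simp only [map_sub, map_mul, map_add, map_one, rename_X, hβ, Bv, rename_C, s2i,
      Equiv.swap_apply_left, Equiv.swap_apply_right, hbraid] at h
    exact h
  -- nonvanishing of the denominators
  have hX : ∀ p q : Fin n, p ≠ q →
      (X p - X q : MvPolynomial (Fin n) (Polynomial ℤ)) ≠ 0 := by
    intro p q hpq
    exact sub_ne_zero.mpr (fun h => hpq (MvPolynomial.X_injective h))
  have hd1 := hX i i' h12
  have hd2 := hX i' i'' h23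
  have hd3 := hX i i'' h13
  set d1 : MvPolynomial (Fin n) (Polynomial ℤ) := X i - X i' with hd1e
  set d2 : MvPolynomial (Fin n) (Polynomial ℤ) := X i' - X i'' with hd2e
  set d3 : MvPolynomial (Fin n) (Polynomial ℤ) := X i - X i'' with hd3e
  have hD : d1 * d1 * d2 * d2 * d3 ≠ 0 :=
    mul_ne_zero (mul_ne_zero (mul_ne_zero (mul_ne_zero hd1 hd1) hd2) hd2) hd3
  apply mul_left_cancel₀ hD
  have T1 := h1 (φ₂ (φ₁ f))
  have T2 := h2 (φ₁ f)
  have T3 := h2s1 (φ₁ f)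
  have E1 := h1 f
  have E3 := h1s2 f
  have E5 := h1s1 f
  have T1' := h2 (φ₁ (φ₂ f))
  have T2' := h1 (φ₂ f)
  have T3' := h1s2 (φ₂ f)
  have E2 := h2 f
  have E4 := h2s1 f
  have E6 := h2s2 f
  linear_combination
      (d1 * d2 * d2 * d3) * T1
    + ((1 + β * X i') * d1 * d2 * d3) * T2
    - ((1 + β * X i) * d1 * d2 * d2) * T3
    + ((1 + β * X i') * (1 + β * X i'') * d2 * d3) * E1
    - ((1 + β * X i') * (1 + β * X i') * d1 * d2) * E3
    - ((1 + β * X i) * (1 + β * X i'') * d2 * d2) * E5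
    + ((1 + β * X i) * (1 + β * X i) * d1 * d2) * E7
    - (d1 * d1 * d2 * d3) * T1'
    - ((1 + β * X i'') * d1 * d2 * d3) * T2'
    + ((1 + β * X i') * d1 * d1 * d2) * T3'
    - ((1 + β * X i'') * (1 + β * X i') * d1 * d3) * E2
    + ((1 + β * X i'') * (1 + β * X i) * d1 * d2) * E4
    + ((1 + β * X i') * (1 + β * X i'') * d1 * d1) * E6
    - ((1 + β * X i') * (1 + β * X i) * d1 * d2) * E8
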